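/- arXiv:1202.5597 — 3 statements merged into one kernel-verified Lean document; each statement's English description precedes it below -/
import Mathlib

section
/- With the block matrix setup of Theorem 1, for any vectors y, ŷ ∈ ℝᵐ and y_O ∈ ℝⁿ, define μ̂ = [C k] M⁻¹ (y_O, ŷ) and μ = [C k] M⁻¹ (y_O, y). Then μ - μ̂ = (k - C A⁻¹ Bᵀ) D (y - ŷ), and consequently |μ - μ̂| ≤ ‖(k - C A⁻¹ Bᵀ) D‖₂ · ‖y - ŷ‖₂. -/
open Matrix

/-- Euclidean norm of a finite real vector. -/
noncomputable def eNorm {m : ℕ} (v : Fin m → ℝ) : ℝ := Real.sqrt (∑ i, (v i) ^ 2)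

/-- Theorem 2 (first part): GP posterior mean estimation error identity and bound. -/
theorem stmt_1 (n m : ℕ)
    (A : Matrix (Fin n) (Fin n) ℝ) (B : Matrix (Fin m) (Fin n) ℝ)
    (C : Matrix (Fin 1) (Fin n) ℝ) (K : Matrix (Fin m) (Fin m) ℝ)
    (k : Matrix (Fin 1) (Fin m) ℝ)
    (hA : IsUnit A.det)
    (hS : IsUnit (K - B * A⁻¹ * Bᵀ).det)
    (D : Matrix (Fin m) (Fin m) ℝ) (hD : D = (K - B * A⁻¹ * Bᵀ)⁻¹)
    (M : Matrix (Fin n ⊕ Fin m) (Fin n ⊕ Fin m) ℝ)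
    (hM : M = Matrix.fromBlocks A Bᵀ B K)
    (hMinv : IsUnit M.det)
    (R : Matrix (Fin 1) (Fin n ⊕ Fin m) ℝ)
    (hR : R = Matrix.fromCols C k)
    (y yh : Fin m → ℝ) (yO : Fin n → ℝ)
    (μ μh : ℝ)
    (hμ : μ = (R * M⁻¹).mulVec (Sum.elim yO y) 0)
    (hμh : μh = (R * M⁻¹).mulVec (Sum.elim yO yh) 0) :
    μ - μh = ((k - C * A⁻¹ * Bᵀ) * D).mulVec (y - yh) 0
    ∧ |μ - μh| ≤ eNorm (fun i => ((k - C * A⁻¹ * Bᵀ) * D) 0 i) * eNorm (y - yh) := by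
  have hAinv : Invertible A := A.invertibleOfIsUnitDet hA
  have hSinv : Invertible (K - B * ⅟A * Bᵀ) := by
    rw [invOf_eq_nonsing_inv]
    exact (K - B * A⁻¹ * Bᵀ).invertibleOfIsUnitDet hS
  have hMI : Invertible M := M.invertibleOfIsUnitDet hMinv
  have hMIb : Invertible (Matrix.fromBlocks A Bᵀ B K) := hM ▸ hMI
  have hMinvEq : M⁻¹ = Matrix.fromBlocks
      (⅟A + ⅟A * Bᵀ * ⅟(K - B * ⅟A * Bᵀ) * B * ⅟A) (-(⅟A * Bᵀ * ⅟(K - B * ⅟A * Bᵀ)))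
      (-(⅟(K - B * ⅟A * Bᵀ) * B * ⅟A)) (⅟(K - B * ⅟A * Bᵀ)) := by
    rw [hM, ← invOf_eq_nonsing_inv, Matrix.invOf_fromBlocks₁₁_eq]
  have hDeq : D = ⅟(K - B * ⅟A * Bᵀ) := by
    rw [hD, invOf_eq_nonsing_inv, invOf_eq_nonsing_inv]
  -- key identity
  have key : μ - μh = ((k - C * A⁻¹ * Bᵀ) * D).mulVec (y - yh) 0 := by
    have h1 : μ - μh = (R * M⁻¹).mulVec (Sum.elim (0 : Fin n → ℝ) (y - yh)) 0 := by
      have : Sum.elim (0 : Fin n → ℝ) (y - yh)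
          = Sum.elim yO y - Sum.elim yO yh := by
        ext (i | i) <;> simp
      rw [hμ, hμh, this, Matrix.mulVec_sub]
      simp [Pi.sub_apply]
    rw [h1, hR, hMinvEq, Matrix.fromCols_mul_fromBlocks,
      Matrix.fromCols_mulVec_sumElim]
    simp only [Matrix.mulVec_zero, Pi.add_apply, Pi.zero_apply, zero_add]
    rw [hDeq]
    congr 1
    rw [← invOf_eq_nonsing_inv A, Matrix.sub_mul, Matrix.mul_neg,
      ← Matrix.mul_assoc, ← Matrix.mul_assoc]
    abel
  refine ⟨key, ?_⟩
  rw [key]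
  set w : Fin m → ℝ := fun i => ((k - C * A⁻¹ * Bᵀ) * D) 0 i with hw
  set v := y - yh with hv
  have hmv : (((k - C * A⁻¹ * Bᵀ) * D).mulVec v) 0 = ∑ i, w i * v i := by
    simp [Matrix.mulVec, dotProduct, hw]
  rw [hmv]
  unfold eNorm
  rw [abs_le]
  have hcs := Real.sum_mul_le_sqrt_mul_sqrt Finset.univ w v
  have hcs' := Real.sum_mul_le_sqrt_mul_sqrt Finset.univ (fun i => -w i) v
  simp only [neg_mul, Finset.sum_neg_distrib, neg_sq] at hcs'
  exact ⟨by linarith, hcs⟩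
end

section
/- Let g(Δ, σ) = -Δ·Φ(-Δ/σ) + σ·φ(Δ/σ). Fix σ > 0 and real numbers y_max, μ, μ̂, y, ŷ with |μ - μ̂| ≤ ρ·|y - ŷ| for some ρ ≥ 0. Set Δ = max(y_max, y) - μ and Δ̂ = max(y_max, ŷ) - μ̂. Then |g(Δ, σ) - g(Δ̂, σ)| ≤ (1/2)(1 + ρ)·|y - ŷ|. -/
open MeasureTheory

/-- Standard normal density. -/
noncomputable def stdPdf (s : ℝ) : ℝ := (Real.sqrt (2 * Real.pi))⁻¹ * Real.exp (-s ^ 2 / 2)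

/-- Standard normal CDF. -/
noncomputable def stdCdf (t : ℝ) : ℝ := ∫ s in Set.Iic t, stdPdf s

/-- Expected improvement function g(Δ, σ) = -Δ·Φ(-Δ/σ) + σ·φ(Δ/σ). -/
noncomputable def EIfun (Δ σ : ℝ) : ℝ := -Δ * stdCdf (-Δ / σ) + σ * stdPdf (Δ / σ)

lemma stdPdf_cont : Continuous stdPdf := by
  unfold stdPdf; fun_prop

lemma stdPdf_nonneg (s : ℝ) : 0 ≤ stdPdf s := by
  unfold stdPdf; positivity

lemma stdPdf_integrable : Integrable stdPdf := by
  have h : Integrable (fun x : ℝ => Real.exp (-(1/2) * x ^ 2)) := integrable_exp_neg_mul_sq (by norm_num)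
  have := h.const_mul (Real.sqrt (2 * Real.pi))⁻¹
  refine this.congr ?_
  filter_upwards with x
  unfold stdPdf
  ring_nf

lemma stdPdf_neg (s : ℝ) : stdPdf (-s) = stdPdf s := by unfold stdPdf; ring_nf

lemma integral_stdPdf : ∫ s, stdPdf s = 1 := by
  have h : ∫ x : ℝ, Real.exp (-(1/2) * x ^ 2) = Real.sqrt (Real.pi / (1/2)) :=
    integral_gaussian (1/2)
  have h2 : ∫ s, stdPdf s = (Real.sqrt (2 * Real.pi))⁻¹ * ∫ x : ℝ, Real.exp (-(1/2) * x ^ 2) := by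
    rw [← integral_const_mul]
    congr 1; ext x; unfold stdPdf; ring_nf
  rw [h2, h]
  have : Real.pi / (1/2) = 2 * Real.pi := by ring
  rw [this, inv_mul_cancel₀]
  positivity

lemma stdCdf_zero : stdCdf 0 = 1/2 := by
  have hsplit : (∫ s in Set.Iic (0:ℝ), stdPdf s) + ∫ s in Set.Ioi (0:ℝ), stdPdf s = 1 := by
    rw [← integral_stdPdf]
    rw [← setIntegral_union (Set.Iic_disjoint_Ioi le_rfl) measurableSet_Ioi
      stdPdf_integrable.integrableOn stdPdf_integrable.integrableOn, Set.Iic_union_Ioi,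
      setIntegral_univ]
  have hsym : (∫ s in Set.Iic (0:ℝ), stdPdf s) = ∫ s in Set.Ioi (0:ℝ), stdPdf s := by
    rw [← neg_zero, ← integral_comp_neg_Iic, neg_zero]
    simp_rw [stdPdf_neg]
  unfold stdCdf
  linarith

lemma stdCdf_nonneg (t : ℝ) : 0 ≤ stdCdf t :=
  setIntegral_nonneg measurableSet_Iic (fun s _ => stdPdf_nonneg s)

lemma stdCdf_mono : Monotone stdCdf := by
  intro a b hab
  unfold stdCdf
  apply setIntegral_mono_set stdPdf_integrable.integrableOn
    (ae_of_all _ fun s => stdPdf_nonneg s) (ae_of_all _ fun s hs => le_trans hs hab)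

lemma stdCdf_le_half {t : ℝ} (ht : t ≤ 0) : stdCdf t ≤ 1/2 := by
  rw [← stdCdf_zero]; exact stdCdf_mono ht

lemma hasDerivAt_stdCdf (t : ℝ) : HasDerivAt stdCdf (stdPdf t) t := by
  have key : ∀ x : ℝ, stdCdf x = stdCdf 0 + ∫ s in (0:ℝ)..x, stdPdf s := by
    intro x
    unfold stdCdf
    have := intervalIntegral.integral_Iic_sub_Iic (f := stdPdf) (μ := volume) (a := 0) (b := x)
      stdPdf_integrable.integrableOn stdPdf_integrable.integrableOn
    linarith
  have hd : HasDerivAt (fun x => stdCdf 0 + ∫ s in (0:ℝ)..x, stdPdf s) (stdPdf t) t := by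
    have := (intervalIntegral.integral_hasDerivAt_right (f := stdPdf) (a := 0) (b := t)
      (stdPdf_integrable.intervalIntegrable)
      (stdPdf_cont.stronglyMeasurableAtFilter _ _)
      stdPdf_cont.continuousAt)
    simpa using (this.const_add (stdCdf 0))
  exact hd.congr_of_eventuallyEq (Filter.Eventually.of_forall fun x => (key x))

lemma hasDerivAt_stdPdf (s : ℝ) : HasDerivAt stdPdf (-s * stdPdf s) s := by
  have h : HasDerivAt (fun s : ℝ => -s ^ 2 / 2) (-s) s := by
    have := ((hasDerivAt_pow 2 s).neg).div_const 2
    exact this.congr_deriv (by norm_num; ring)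
  have h2 := (h.exp).const_mul ((Real.sqrt (2 * Real.pi))⁻¹)
  unfold stdPdf
  exact h2.congr_deriv (by ring)

lemma hasDerivAt_EI (σ : ℝ) (hσ : 0 < σ) (x : ℝ) :
    HasDerivAt (fun Δ => EIfun Δ σ) (-(stdCdf (-x / σ))) x := by
  have h1 : HasDerivAt (fun Δ : ℝ => -Δ / σ) (-1 / σ) x := by
    simpa using ((hasDerivAt_id x).neg).div_const σ
  have h2 : HasDerivAt (fun Δ : ℝ => Δ / σ) (1 / σ) x := by
    simpa using (hasDerivAt_id x).div_const σ
  have hc : HasDerivAt (fun Δ : ℝ => stdCdf (-Δ / σ)) (stdPdf (-x / σ) * (-1 / σ)) x :=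
    by have := (hasDerivAt_stdCdf (-x / σ)).comp x h1; exact this
  have hp : HasDerivAt (fun Δ : ℝ => stdPdf (Δ / σ)) ((-(x / σ) * stdPdf (x / σ)) * (1 / σ)) x :=
    by have := (hasDerivAt_stdPdf (x / σ)).comp x h2; exact this
  have hA : HasDerivAt (fun Δ : ℝ => -Δ * stdCdf (-Δ / σ))
      ((-1) * stdCdf (-x / σ) + (-x) * (stdPdf (-x / σ) * (-1 / σ))) x :=
    ((hasDerivAt_id x).neg).mul hc
  have hB : HasDerivAt (fun Δ : ℝ => σ * stdPdf (Δ / σ))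
      (σ * ((-(x / σ) * stdPdf (x / σ)) * (1 / σ))) x := hp.const_mul σ
  have := hA.add hB
  unfold EIfun
  refine this.congr_deriv ?_
  have hneg : stdPdf (-x / σ) = stdPdf (x / σ) := by
    rw [neg_div, stdPdf_neg]
  rw [hneg]
  field_simp
  ring

lemma EI_lip (σ : ℝ) (hσ : 0 < σ) {a b : ℝ} (ha : 0 ≤ a) (hb : 0 ≤ b) :
    |EIfun a σ - EIfun b σ| ≤ (1 / 2) * |a - b| := by
  have key := Convex.norm_image_sub_le_of_norm_hasDerivWithin_le
    (f := fun Δ => EIfun Δ σ) (f' := fun x => -(stdCdf (-x / σ))) (C := 1/2) (s := Set.Ici 0)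
    (fun x _ => (hasDerivAt_EI σ hσ x).hasDerivWithinAt)
    (fun x hx => by
      rw [Real.norm_eq_abs, abs_neg, abs_of_nonneg (stdCdf_nonneg _)]
      exact stdCdf_le_half (div_nonpos_of_nonpos_of_nonneg (neg_nonpos_of_nonneg hx) hσ.le))
    (convex_Ici 0) hb ha
  simpa [Real.norm_eq_abs] using key

/-- Lemma 1: EI perturbation bound, |g(Δ,σ) - g(Δ̂,σ)| ≤ (1/2)(1+ρ)|y - ŷ|. -/
theorem stmt_6 (σ ρ ymax μ μh y yh Δ Δh : ℝ)
    (hσ : 0 < σ) (hρ : 0 ≤ ρ)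
    (hμ : |μ - μh| ≤ ρ * |y - yh|)
    (hΔ : Δ = max ymax y - μ) (hΔh : Δh = max ymax yh - μh)
    (hΔ0 : 0 ≤ Δ) (hΔh0 : 0 ≤ Δh) :
    |EIfun Δ σ - EIfun Δh σ| ≤ (1 / 2) * (1 + ρ) * |y - yh| := by

  have hmax : |max ymax y - max ymax yh| ≤ |y - yh| := by
    rw [max_comm ymax y, max_comm ymax yh]
    exact abs_max_sub_max_le_abs _ _ _
  have hΔd : |Δ - Δh| ≤ (1 + ρ) * |y - yh| := by
    have : Δ - Δh = (max ymax y - max ymax yh) - (μ - μh) := by rw [hΔ, hΔh]; ring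
    rw [this]
    calc |(max ymax y - max ymax yh) - (μ - μh)|
        ≤ |max ymax y - max ymax yh| + |μ - μh| := abs_sub _ _
      _ ≤ |y - yh| + ρ * |y - yh| := add_le_add hmax hμ
      _ = (1 + ρ) * |y - yh| := by ring
  calc |EIfun Δ σ - EIfun Δh σ| ≤ (1 / 2) * |Δ - Δh| := EI_lip σ hσ hΔ0 hΔh0
    _ ≤ (1 / 2) * ((1 + ρ) * |y - yh|) := by linarith
    _ = (1 / 2) * (1 + ρ) * |y - yh| := by ring
end

section
/- With m = 1 (single new query), the expected absolute mean change satisfies E[|μ_{z|O,x} - μ̂_{z|O,x}|] = |k(z,x₁*) - C A⁻¹ Bᵀ| · D · √(2/π) · σ_{x₁*|O}, where the expectation is over y ~ N(μ_{x₁*|O}, σ²_{x₁*|O}) and ŷ = μ_{x₁*|O}. -/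
open Matrix MeasureTheory ProbabilityTheory Real Set Filter
open scoped NNReal ENNReal

lemma halfnorm_Ioi {b : ℝ} (hb : 0 < b) :
    ∫ x in Set.Ioi (0:ℝ), x * Real.exp (-b * x ^ 2) = (2 * b)⁻¹ := by
  have A : ∀ x : ℝ, HasDerivAt (fun x => -(2 * b)⁻¹ * Real.exp (-b * x ^ 2))
      (x * Real.exp (-b * x ^ 2)) x := by
    intro x
    convert ((hasDerivAt_pow 2 x).const_mul (-b)).exp.const_mul (-(2 * b)⁻¹) using 1
    · rfl
    · rfl
    field_simp
    ring
  have B : Filter.Tendsto (fun y : ℝ ↦ -(2 * b)⁻¹ * Real.exp (-b * y ^ 2))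
      Filter.atTop (nhds (-(2 * b)⁻¹ * 0)) := by
    refine Filter.Tendsto.const_mul _ ?_
    exact Real.tendsto_exp_atBot.comp
      ((tendsto_pow_atTop two_ne_zero).const_mul_atTop_of_neg (neg_lt_zero.2 hb))
  have := integral_Ioi_of_hasDerivAt_of_tendsto' (a := (0:ℝ)) (fun x _ => A x)
    (integrable_mul_exp_neg_mul_sq hb).integrableOn B
  simpa using this

lemma gaussian_abs_integral (m σ : ℝ) (hσ : 0 < σ) :
    ∫ x, |x - m| ∂(gaussianReal m ⟨σ ^ 2, sq_nonneg _⟩) = Real.sqrt (2 / Real.pi) * σ := by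
  set v : ℝ≥0 := ⟨σ ^ 2, sq_nonneg _⟩ with hv_def
  have hv : v ≠ 0 := by
    intro h
    rw [hv_def] at h
    have h' : σ ^ 2 = 0 := congrArg NNReal.toReal h
    exact pow_ne_zero 2 hσ.ne' h'
  rw [gaussianReal_of_var_ne_zero _ hv]
  have hpdf : gaussianPDF m v = fun x => ((gaussianPDFReal m v x).toNNReal : ℝ≥0∞) := rfl
  rw [hpdf, integral_withDensity_eq_integral_smul
    ((measurable_gaussianPDFReal m v).real_toNNReal) _]
  have h1 : ∀ x : ℝ, (gaussianPDFReal m v x).toNNReal • |x - m|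
      = gaussianPDFReal m v x * |x - m| := by
    intro x
    rw [NNReal.smul_def, Real.coe_toNNReal _ (gaussianPDFReal_nonneg m v x), smul_eq_mul]
  simp_rw [h1, gaussianPDFReal]
  have hvc : (v : ℝ) = σ ^ 2 := rfl
  rw [show (∫ x, (√(2 * π * v))⁻¹ * rexp (-(x - m) ^ 2 / (2 * v)) * |x - m|)
      = ∫ x, (fun y => (√(2 * π * v))⁻¹ * rexp (-y ^ 2 / (2 * v)) * |y|) (x - m) from rfl]
  rw [integral_sub_right_eq_self (fun y => (√(2 * π * (v:ℝ)))⁻¹ * rexp (-y ^ 2 / (2 * (v:ℝ))) * |y|) m]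
  have h2 : ∀ x : ℝ, (√(2 * π * v))⁻¹ * rexp (-x ^ 2 / (2 * v)) * |x|
      = (√(2 * π * v))⁻¹ * rexp (-(2 * (v:ℝ))⁻¹ * |x| ^ 2) * |x| := by
    intro x
    rw [sq_abs]
    ring_nf
  simp_rw [h2]
  rw [integral_comp_abs (f := fun x => (√(2 * π * v))⁻¹ * rexp (-(2 * (v:ℝ))⁻¹ * x ^ 2) * x)]
  have hb : 0 < (2 * (v:ℝ))⁻¹ := by rw [hvc]; positivity
  have h3 : ∫ x in Set.Ioi (0:ℝ), (√(2 * π * v))⁻¹ * rexp (-(2 * (v:ℝ))⁻¹ * x ^ 2) * x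
      = (√(2 * π * v))⁻¹ * ∫ x in Set.Ioi (0:ℝ), x * rexp (-(2 * (v:ℝ))⁻¹ * x ^ 2) := by
    rw [← MeasureTheory.integral_const_mul]
    congr 1; ext x; ring
  rw [h3, halfnorm_Ioi hb]
  rw [hvc]
  have hπ : 0 < π := Real.pi_pos
  have hs : √(2 * π * σ ^ 2) = √(2 * π) * σ := by
    rw [Real.sqrt_mul (by positivity), Real.sqrt_sq hσ.le]
  have hs2 : √(2 / π) = 2 / √(2 * π) := by
    rw [eq_div_iff (by positivity), ← Real.sqrt_mul (by positivity)]
    rw [show 2 / π * (2 * π) = 2 ^ 2 by field_simp]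
    rw [Real.sqrt_sq (by norm_num)]
  rw [hs, hs2]
  have h2πσ : (0:ℝ) < √(2 * π) * σ := by positivity
  field_simp

/-- Single new query (m = 1): the expected absolute GP posterior mean change equals
    |k(z,x₁*) − C A⁻¹ Bᵀ| · D · √(2/π) · σ, where the expectation is over
    y ~ N(μ_{x₁*|O}, σ²) and ŷ = μ_{x₁*|O}. -/
theorem stmt_14 {Ω : Type*} [MeasurableSpace Ω] (P : Measure Ω) [IsProbabilityMeasure P]
    (n : ℕ)
    (A : Matrix (Fin n) (Fin n) ℝ) (B C : Matrix (Fin 1) (Fin n) ℝ)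
    (K kz : Matrix (Fin 1) (Fin 1) ℝ)
    (hA : IsUnit A.det)
    (M : Matrix (Fin n ⊕ Fin 1) (Fin n ⊕ Fin 1) ℝ)
    (hM : M = Matrix.fromBlocks A Bᵀ B K)
    (hMinv : IsUnit M.det)
    (R : Matrix (Fin 1) (Fin n ⊕ Fin 1) ℝ)
    (hR : R = Matrix.fromCols C kz)
    (σ D : ℝ) (hσ : 0 < σ)
    (hσ2 : σ ^ 2 = (K - B * A⁻¹ * Bᵀ) 0 0)
    (hD : D = 1 / σ ^ 2)
    (yO : Fin n → ℝ) (μ₁ : ℝ) (hμ₁ : μ₁ = (B * A⁻¹).mulVec yO 0)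
    (Y : Ω → ℝ) (hmeas : Measurable Y)
    (hgauss : P.map Y = gaussianReal μ₁ ⟨σ ^ 2, sq_nonneg _⟩)
    (μ : Ω → ℝ) (μh : ℝ)
    (hμ : ∀ ω, μ ω = (R * M⁻¹).mulVec (Sum.elim yO (fun _ => Y ω)) 0)
    (hμh : μh = (R * M⁻¹).mulVec (Sum.elim yO (fun _ => μ₁)) 0) :
    ∫ ω, |μ ω - μh| ∂P
      = |kz 0 0 - (C * A⁻¹ * Bᵀ) 0 0| * D * Real.sqrt (2 / Real.pi) * σ := by
  have hσ2ne : σ ^ 2 ≠ 0 := by positivity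
  have hD0 : 0 ≤ D := by rw [hD]; positivity
  set c : ℝ := kz 0 0 - (C * A⁻¹ * Bᵀ) 0 0 with hc
  set e : Fin 1 → ℝ := fun _ => 1 with he
  set u : Fin n ⊕ Fin 1 → ℝ :=
    Sum.elim ((-D) • (A⁻¹ * Bᵀ).mulVec e) (D • e) with hu_def
  have hAw : A.mulVec ((-D) • (A⁻¹ * Bᵀ).mulVec e) = (-D) • Bᵀ.mulVec e := by
    rw [mulVec_smul, mulVec_mulVec, ← Matrix.mul_assoc, Matrix.mul_nonsing_inv A hA,
      Matrix.one_mul]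
  have hMu : M.mulVec u = Sum.elim (0 : Fin n → ℝ) e := by
    rw [hM, hu_def, fromBlocks_mulVec]
    funext i
    cases i with
    | inl i =>
      simp only [Sum.elim_comp_inl, Sum.elim_comp_inr, Sum.elim_inl, Pi.add_apply]
      rw [hAw, mulVec_smul]
      simp
    | inr i =>
      simp only [Sum.elim_comp_inl, Sum.elim_comp_inr, Sum.elim_inr, Pi.add_apply]
      rw [mulVec_smul, mulVec_mulVec, mulVec_smul]
      have hi : i = 0 := Subsingleton.elim _ _
      have hK : (K.mulVec e) i = K 0 0 := by
        simp [Matrix.mulVec, dotProduct, he, hi, Fin.sum_univ_one]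
      have hS : ((B * (A⁻¹ * Bᵀ)).mulVec e) i = (B * A⁻¹ * Bᵀ) 0 0 := by
        simp [Matrix.mulVec, dotProduct, he, hi, Fin.sum_univ_one, Matrix.mul_assoc]
      simp only [Pi.smul_apply, smul_eq_mul, neg_mul, hK, hS]
      have : K 0 0 - (B * A⁻¹ * Bᵀ) 0 0 = σ ^ 2 := by
        rw [hσ2]; simp [Matrix.sub_apply]
      have hDσ : D * σ ^ 2 = 1 := by rw [hD]; field_simp
      have : -(D * (B * A⁻¹ * Bᵀ) 0 0) + D * K 0 0 = D * σ ^ 2 := by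
        rw [← this]; ring
      rw [this, hDσ]
  have huinv : M⁻¹.mulVec (Sum.elim (0 : Fin n → ℝ) e) = u := by
    have h := congrArg (M⁻¹.mulVec) hMu
    rw [mulVec_mulVec, Matrix.nonsing_inv_mul M hMinv, one_mulVec] at h
    exact h.symm
  have hRu : (R * M⁻¹).mulVec (Sum.elim (0 : Fin n → ℝ) e) 0 = c * D := by
    rw [← mulVec_mulVec, huinv, hR, hu_def, fromCols_mulVec_sumElim]
    rw [mulVec_smul, mulVec_mulVec, mulVec_smul]
    have hkz : (kz.mulVec e) 0 = kz 0 0 := by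
      simp [Matrix.mulVec, dotProduct, he, Fin.sum_univ_one]
    have hCB : ((C * (A⁻¹ * Bᵀ)).mulVec e) 0 = (C * A⁻¹ * Bᵀ) 0 0 := by
      simp [Matrix.mulVec, dotProduct, he, Fin.sum_univ_one, Matrix.mul_assoc]
    simp only [Pi.add_apply, Pi.smul_apply, smul_eq_mul, hkz, hCB, hc]
    ring
  have hlin : ∀ t : ℝ, (R * M⁻¹).mulVec (Sum.elim (0 : Fin n → ℝ) (fun _ => t)) 0 = c * D * t := by
    intro t
    have : (Sum.elim (0 : Fin n → ℝ) (fun _ => t)) = t • Sum.elim (0 : Fin n → ℝ) e := by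
      funext i; cases i <;> simp [he]
    rw [this, mulVec_smul, Pi.smul_apply, smul_eq_mul, hRu]
    ring
  have hdiff : ∀ ω, μ ω - μh = c * D * (Y ω - μ₁) := by
    intro ω
    have hsplit : Sum.elim yO (fun _ : Fin 1 => Y ω)
        = Sum.elim yO (fun _ : Fin 1 => μ₁) + Sum.elim (0 : Fin n → ℝ) (fun _ : Fin 1 => Y ω - μ₁) := by
      funext i; cases i <;> simp
    rw [hμ ω, hμh, hsplit, mulVec_add, Pi.add_apply, add_sub_cancel_left, hlin]
  have habs : ∀ ω, |μ ω - μh| = (|c| * D) * |Y ω - μ₁| := by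
    intro ω
    rw [hdiff ω, abs_mul, abs_mul, abs_of_nonneg hD0]
  calc ∫ ω, |μ ω - μh| ∂P = ∫ ω, (|c| * D) * |Y ω - μ₁| ∂P := by
        exact integral_congr_ae (Filter.Eventually.of_forall habs)
    _ = (|c| * D) * ∫ ω, |Y ω - μ₁| ∂P := by rw [MeasureTheory.integral_const_mul]
    _ = (|c| * D) * ∫ x, |x - μ₁| ∂(gaussianReal μ₁ ⟨σ ^ 2, sq_nonneg _⟩) := by
        have hg : AEStronglyMeasurable (fun x : ℝ => |x - μ₁|) (P.map Y) :=
          ((continuous_abs.comp (continuous_id.sub continuous_const))).aestronglyMeasurable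
        have hmap : ∫ ω, |Y ω - μ₁| ∂P = ∫ x, |x - μ₁| ∂(P.map Y) :=
          (integral_map (f := fun x : ℝ => |x - μ₁|) hmeas.aemeasurable hg).symm
        rw [hmap, hgauss]
    _ = (|c| * D) * (Real.sqrt (2 / Real.pi) * σ) := by rw [gaussian_abs_integral μ₁ σ hσ]
    _ = |c| * D * Real.sqrt (2 / Real.pi) * σ := by ring
end
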